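/- arXiv:2005.14425 — 10 statements merged into one kernel-verified Lean document; each statement's English description precedes it below -/
import Mathlib

section
/- For all real numbers p and γ with 0 < p < 1 and 0 < γ < 1, we have p·log(p/γ) + 2γ·log(2γ/(p+γ)) ≤ 2·d(p‖γ). -/
lemma aux_sinh_le_mul_cosh {x : ℝ} (hx : 0 ≤ x) : Real.sinh x ≤ x * Real.cosh x := by
  have mono : MonotoneOn (fun y : ℝ => y * Real.cosh y - Real.sinh y) (Set.Ici 0) := by
    apply monotoneOn_of_deriv_nonneg (convex_Ici 0)
    · exact ((continuous_id.mul Real.continuous_cosh).sub Real.continuous_sinh).continuousOn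
    · intro y hy
      exact (((hasDerivAt_id' (x := y)).mul (Real.hasDerivAt_cosh y)).sub
        (Real.hasDerivAt_sinh y)).differentiableAt.differentiableWithinAt
    · intro y hy
      rw [interior_Ici, Set.mem_Ioi] at hy
      have hd : deriv (fun y : ℝ => y * Real.cosh y - Real.sinh y) y = y * Real.sinh y := by
        have := (((hasDerivAt_id' (x := y)).mul (Real.hasDerivAt_cosh y)).sub
          (Real.hasDerivAt_sinh y)).deriv
        rw [show (fun y : ℝ => y * Real.cosh y - Real.sinh y) = ((fun x => x) * Real.cosh - Real.sinh) from rfl, this]; ring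
      rw [hd]
      exact mul_nonneg hy.le (by simpa using Real.sinh_nonneg_iff.mpr hy.le)
  have := mono (Set.self_mem_Ici) (Set.mem_Ici.mpr hx) hx
  simpa using this

lemma aux_log_le_quad {x : ℝ} (hx : 1 ≤ x) : Real.log x ≤ (x - 1/x)/2 := by
  have hx0 : 0 < x := lt_of_lt_of_le one_pos hx
  have ht : 0 ≤ Real.log x := Real.log_nonneg hx
  have h := Real.self_le_sinh_iff.mpr ht
  rwa [Real.sinh_eq, Real.exp_log hx0, Real.exp_neg, Real.exp_log hx0, ← one_div] at h

lemma aux_quad_le_log {x : ℝ} (hx : 1 ≤ x) : 2*(x-1)/(x+1) ≤ Real.log x := by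
  have hx0 : 0 < x := lt_of_lt_of_le one_pos hx
  have ht : 0 ≤ Real.log x := Real.log_nonneg hx
  have h := aux_sinh_le_mul_cosh (x := Real.log x / 2) (by linarith)
  rw [Real.sinh_eq, Real.cosh_eq] at h
  set E := Real.exp (Real.log x / 2) with hE
  have hEpos : 0 < E := Real.exp_pos _
  have hE2 : E * E = x := by
    rw [hE, ← Real.exp_add]
    rw [show Real.log x / 2 + Real.log x / 2 = Real.log x by ring, Real.exp_log hx0]
  have hEneg : Real.exp (-(Real.log x / 2)) = E⁻¹ := by rw [Real.exp_neg]
  rw [hEneg] at h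
  rw [div_le_iff₀ (by linarith : (0:ℝ) < x + 1)]
  have hEne : E ≠ 0 := ne_of_gt hEpos
  have hInv : E * E⁻¹ = 1 := mul_inv_cancel₀ hEne
  have h2 : E * E - 1 ≤ Real.log x / 2 * (E * E + 1) := by
    have h3 := mul_le_mul_of_nonneg_left h (le_of_lt hEpos)
    nlinarith [h3, hInv]
  rw [hE2] at h2
  linarith

lemma aux_key_low {a b : ℝ} (hb : 0 < b) (hab : b ≤ a) :
    2*(a-b)/(a+b) ≤ Real.log (a/b) := by
  have ha : 0 < a := lt_of_lt_of_le hb hab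
  have hx : 1 ≤ a/b := (one_le_div hb).mpr hab
  have h := aux_quad_le_log hx
  have heq : 2*(a/b-1)/(a/b+1) = 2*(a-b)/(a+b) := by
    rw [div_eq_div_iff (by positivity) (by positivity)]
    field_simp
  rwa [heq] at h

lemma aux_key_high {a b : ℝ} (hb : 0 < b) (hab : b ≤ a) :
    Real.log (a/b) ≤ (a*a - b*b)/(2*(a*b)) := by
  have ha : 0 < a := lt_of_lt_of_le hb hab
  have hx : 1 ≤ a/b := (one_le_div hb).mpr hab
  have h := aux_log_le_quad hx
  have heq : (a/b - 1/(a/b))/2 = (a*a - b*b)/(2*(a*b)) := by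
    rw [one_div_div]
    rw [div_eq_div_iff (by norm_num) (by positivity)]
    field_simp
  rwa [heq] at h

lemma aux_key_low' {a b : ℝ} (ha : 0 < a) (hab : a ≤ b) :
    (a*a - b*b)/(2*(a*b)) ≤ Real.log (a/b) := by
  have hb : 0 < b := lt_of_lt_of_le ha hab
  have h := aux_key_high ha hab
  have hlog : Real.log (a/b) = - Real.log (b/a) := by
    rw [← Real.log_inv, inv_div]
  rw [hlog]
  have heq : (a*a - b*b)/(2*(a*b)) = -((b*b - a*a)/(2*(b*a))) := by
    rw [neg_div']
    rw [div_eq_div_iff (by positivity) (by positivity)]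
    ring
  rw [heq]
  linarith

lemma aux_key_high' {a b : ℝ} (ha : 0 < a) (hb : 0 < b) :
    Real.log (a/b) ≤ (a-b)/b := by
  have h := Real.log_le_sub_one_of_pos (show 0 < a/b by positivity)
  have heq : a/b - 1 = (a-b)/b := by field_simp
  linarith [heq ▸ h]

/-- Kullback–Leibler divergence between two Bernoulli distributions with means `p` and `q`. -/
noncomputable def klBer (p q : ℝ) : ℝ :=
  p * Real.log (p / q) + (1 - p) * Real.log ((1 - p) / (1 - q))

theorem stmt0 (p γ : ℝ) (hp0 : 0 < p) (hp1 : p < 1) (hγ0 : 0 < γ) (hγ1 : γ < 1) :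
    p * Real.log (p / γ) + 2 * γ * Real.log (2 * γ / (p + γ)) ≤ 2 * klBer p γ := by
  unfold klBer
  have hq0 : 0 < 1 - p := by linarith
  have hq1 : 0 < 1 - γ := by linarith
  have hpγ : 0 < p + γ := by linarith
  rcases le_total γ p with hc | hc
  · -- case γ ≤ p
    have e1 : 2*(p-γ)/(p+γ) ≤ Real.log (p/γ) := aux_key_low hγ0 hc
    have e2 : ((1-p)*(1-p) - (1-γ)*(1-γ))/(2*((1-p)*(1-γ))) ≤ Real.log ((1-p)/(1-γ)) :=
      aux_key_low' hq0 (by linarith)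
    have e3 : Real.log (2*γ/(p+γ)) ≤ (2*γ - (p+γ))/(p+γ) :=
      aux_key_high' (by linarith) hpγ
    have f1 := mul_le_mul_of_nonneg_left e1 hp0.le
    have f2 := mul_le_mul_of_nonneg_left e2 (show (0:ℝ) ≤ 2*(1-p) by linarith)
    have f3 := mul_le_mul_of_nonneg_left e3 (show (0:ℝ) ≤ 2*γ by linarith)
    have hkey : p*(2*(p-γ)/(p+γ)) + 2*(1-p)*(((1-p)*(1-p) - (1-γ)*(1-γ))/(2*((1-p)*(1-γ))))
        - 2*γ*((2*γ - (p+γ))/(p+γ)) = (p-γ)^2/(1-γ) := by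
      field_simp
      ring
    have hnn : (0:ℝ) ≤ (p-γ)^2/(1-γ) := by positivity
    linarith
  · -- case p ≤ γ
    have e1 : (p*p - γ*γ)/(2*(p*γ)) ≤ Real.log (p/γ) := aux_key_low' hp0 hc
    have e2 : 2*((1-p)-(1-γ))/((1-p)+(1-γ)) ≤ Real.log ((1-p)/(1-γ)) :=
      aux_key_low hq1 (by linarith)
    have e3 : Real.log (2*γ/(p+γ)) ≤ ((2*γ)*(2*γ) - (p+γ)*(p+γ))/(2*((2*γ)*(p+γ))) :=
      aux_key_high hpγ (by linarith)
    have f1 := mul_le_mul_of_nonneg_left e1 hp0.le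
    have f2 := mul_le_mul_of_nonneg_left e2 (show (0:ℝ) ≤ 2*(1-p) by linarith)
    have f3 := mul_le_mul_of_nonneg_left e3 (show (0:ℝ) ≤ 2*γ by linarith)
    have hkey : p*((p*p - γ*γ)/(2*(p*γ))) + 2*(1-p)*(2*((1-p)-(1-γ))/((1-p)+(1-γ)))
        - 2*γ*(((2*γ)*(2*γ) - (p+γ)*(p+γ))/(2*((2*γ)*(p+γ))))
        = (γ-p)^2*(4*γ^2 + 3*p*γ + 2*p - p^2)/(2*γ*(p+γ)*(2-p-γ)) := by
      have h2 : (0:ℝ) < 2 - p - γ := by linarith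
      field_simp
      ring
    have hnn : (0:ℝ) ≤ (γ-p)^2*(4*γ^2 + 3*p*γ + 2*p - p^2)/(2*γ*(p+γ)*(2-p-γ)) := by
      apply div_nonneg
      · apply mul_nonneg (sq_nonneg _)
        nlinarith
      · nlinarith
    linarith
end

section
/- For all real numbers x and y with 0 < x < y < 1, there exists a unique z with x < z < y such that d(z‖x) = d(z‖y). -/
theorem stmt1 (x y : ℝ) (hx : 0 < x) (hxy : x < y) (hy : y < 1) :
    ∃! z : ℝ, x < z ∧ z < y ∧ klBer z x = klBer z y := by
  have hy0 : 0 < y := hx.trans hxy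
  have hx1 : x < 1 := hxy.trans hy
  have h1x : (0:ℝ) < 1 - x := by linarith
  have h1y : (0:ℝ) < 1 - y := by linarith
  set a := Real.log y - Real.log x with ha_def
  set b := Real.log (1-x) - Real.log (1-y) with hb_def
  have ha : 0 < a := sub_pos.2 (Real.log_lt_log hx hxy)
  have hb : 0 < b := sub_pos.2 (Real.log_lt_log h1y (by linarith))
  have hab : 0 < a + b := by linarith
  -- key reformulation
  have key : ∀ z, x < z → z < y → (klBer z x = klBer z y ↔ z * (a + b) = b) := by
    intro z hz1 hz2
    have hz0 : 0 < z := hx.trans hz1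
    have hz1' : (0:ℝ) < 1 - z := by linarith [hz2.trans hy]
    have e1 : klBer z x - klBer z y = z * (a+b) - b := by
      simp only [klBer, ha_def, hb_def]
      rw [Real.log_div hz0.ne' hx.ne', Real.log_div hz0.ne' hy0.ne',
          Real.log_div hz1'.ne' h1x.ne', Real.log_div hz1'.ne' h1y.ne']
      ring
    constructor
    · intro h; rw [h] at e1; linarith
    · intro h
      have : klBer z x - klBer z y = 0 := by rw [e1, h]; ring
      linarith
  -- the two strict inequalities
  have l1 : a < y / x - 1 := by
    rw [ha_def, ← Real.log_div hy0.ne' hx.ne']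
    exact Real.log_lt_sub_one_of_pos (div_pos hy0 hx) ((one_lt_div hx).2 hxy).ne'
  have l2 : -b < (1 - y) / (1 - x) - 1 := by
    have : Real.log (1-y) - Real.log (1-x) = Real.log ((1-y)/(1-x)) :=
      (Real.log_div h1y.ne' h1x.ne').symm
    rw [hb_def, show -(Real.log (1-x) - Real.log (1-y)) = Real.log (1-y) - Real.log (1-x) by ring,
      this]
    exact Real.log_lt_sub_one_of_pos (div_pos h1y h1x)
      (by
        have : (1-y)/(1-x) < 1 := (div_lt_one h1x).2 (by linarith)
        exact this.ne)
  have l3 : -a < x / y - 1 := by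
    have : -a = Real.log (x/y) := by
      rw [ha_def, Real.log_div hx.ne' hy0.ne']; ring
    rw [this]
    exact Real.log_lt_sub_one_of_pos (div_pos hx hy0)
      (((div_lt_one hy0).2 hxy).ne)
  have l4 : b < (1 - x) / (1 - y) - 1 := by
    rw [hb_def, ← Real.log_div h1x.ne' h1y.ne']
    exact Real.log_lt_sub_one_of_pos (div_pos h1x h1y) ((one_lt_div h1y).2 (by linarith)).ne'
  have hxa : x * a < x * (y/x - 1) := by nlinarith
  have hxb : (1-x) * (-b) < (1-x) * ((1-y)/(1-x) - 1) := by nlinarith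
  have e2 : x * (y/x - 1) = y - x := by field_simp
  have e3 : (1-x) * ((1-y)/(1-x) - 1) = x - y := by field_simp; ring
  have h1 : x * (a + b) < b := by nlinarith
  have hya : y * (-a) < y * (x/y - 1) := by nlinarith
  have hyb : (1-y) * b < (1-y) * ((1-x)/(1-y) - 1) := by nlinarith
  have e4 : y * (x/y - 1) = x - y := by field_simp
  have e5 : (1-y) * ((1-x)/(1-y) - 1) = y - x := by field_simp; ring
  have h2 : b < y * (a + b) := by nlinarith
  refine ⟨b / (a + b), ⟨(lt_div_iff₀ hab).2 h1, (div_lt_iff₀ hab).2 h2, ?_⟩, ?_⟩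
  · rw [key _ ((lt_div_iff₀ hab).2 h1) ((div_lt_iff₀ hab).2 h2)]
    field_simp
  · rintro z ⟨hz1, hz2, hz3⟩
    have hz := (key z hz1 hz2).1 hz3
    field_simp
    linarith
end

section
/- For all real numbers x and y with 0 < x < y < 1, the Chernoff information satisfies min{ d((x+y)/2‖x), d((x+y)/2‖y) } ≤ d*(x,y) ≤ max{ d((x+y)/2‖x), d((x+y)/2‖y) }. -/
lemma klBer_symm (p q : ℝ) : klBer (1 - p) (1 - q) = klBer p q := by
  unfold klBer
  have h1 : (1 : ℝ) - (1 - p) = p := by ring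
  have h2 : (1 : ℝ) - (1 - q) = q := by ring
  rw [h1, h2]; ring

lemma klBer_mono {q a b : ℝ} (hq : 0 < q) (hqa : q ≤ a) (hab : a ≤ b) (hb : b < 1) :
    klBer a q ≤ klBer b q := by
  set g : ℝ → ℝ := fun p => p * (Real.log p - Real.log q)
      + (1 - p) * (Real.log (1 - p) - Real.log (1 - q)) with hg
  have hder : ∀ p : ℝ, 0 < p → p < 1 →
      HasDerivAt g (Real.log p - Real.log q - (Real.log (1 - p) - Real.log (1 - q))) p := by
    intro p hp hp1
    have h1 : HasDerivAt (fun p : ℝ => p * (Real.log p - Real.log q))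
        (1 * (Real.log p - Real.log q) + p * p⁻¹) p :=
      (hasDerivAt_id p).mul ((Real.hasDerivAt_log hp.ne').sub_const _)
    have hlog : HasDerivAt (fun p : ℝ => Real.log (1 - p)) ((1 - p)⁻¹ * (-1)) p := by
      have hu : HasDerivAt (fun p : ℝ => 1 - p) (-1) p := by
        simpa using (hasDerivAt_id' p).const_sub (1:ℝ)
      exact (Real.hasDerivAt_log (by linarith)).comp p hu
    have h2 : HasDerivAt (fun p : ℝ => (1 - p) * (Real.log (1 - p) - Real.log (1 - q)))
        ((-1) * (Real.log (1 - p) - Real.log (1 - q)) + (1 - p) * ((1 - p)⁻¹ * (-1))) p := by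
      have hu : HasDerivAt (fun p : ℝ => 1 - p) (-1) p := by
        simpa using (hasDerivAt_id' p).const_sub (1:ℝ)
      exact hu.mul (hlog.sub_const _)
    have this : HasDerivAt (fun p => p * (Real.log p - Real.log q)
      + (1 - p) * (Real.log (1 - p) - Real.log (1 - q))) _ p := h1.add h2
    convert this using 1
    have hne : p ≠ 0 := hp.ne'
    have hne2 : (1 : ℝ) - p ≠ 0 := by intro h; linarith [h]
    rw [mul_inv_cancel₀ hne, mul_inv_cancel_left₀ hne2]
    ring
  have hgmono : StrictMonoOn g (Set.Ico q 1) := by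
    apply strictMonoOn_of_deriv_pos (convex_Ico q 1)
    · intro p hp
      exact ((hder p (lt_of_lt_of_le hq hp.1) hp.2).differentiableAt.continuousAt).continuousWithinAt
    · intro p hp
      rw [interior_Ico] at hp
      obtain ⟨hpq, hp1⟩ := hp
      have hp0 : 0 < p := lt_trans hq hpq
      rw [(hder p hp0 hp1).deriv]
      have l1 : Real.log q < Real.log p := Real.log_lt_log hq hpq
      have l2 : Real.log (1 - p) < Real.log (1 - q) :=
        Real.log_lt_log (by linarith) (by linarith)
      linarith
  have hq1 : q < 1 := lt_of_le_of_lt (le_trans hqa hab) hb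
  have key : ∀ p : ℝ, 0 < p → p < 1 → klBer p q = g p := by
    intro p hp hp1
    unfold klBer
    rw [Real.log_div hp.ne' hq.ne', Real.log_div (by linarith : (1:ℝ) - p ≠ 0)
      (by linarith : (1:ℝ) - q ≠ 0)]
  have ha0 : 0 < a := lt_of_lt_of_le hq hqa
  have ha1 : a < 1 := lt_of_le_of_lt hab hb
  rw [key a ha0 ha1, key b (lt_of_lt_of_le ha0 hab) hb]
  exact hgmono.monotoneOn ⟨hqa, ha1⟩ ⟨le_trans hqa hab, hb⟩ hab

lemma klBer_anti {q a b : ℝ} (hq1 : q < 1) (ha : 0 < a) (hab : a ≤ b) (hbq : b ≤ q) :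
    klBer b q ≤ klBer a q := by
  rw [← klBer_symm a q, ← klBer_symm b q]
  exact klBer_mono (by linarith) (by linarith) (by linarith) (by linarith)

/-- For `0 < x < y < 1`, the Chernoff information `d*(x,y)` equals `d(z‖x)` where `z` is the
unique point strictly between `x` and `y` with `d(z‖x) = d(z‖y)`.  The statement asserts
`min{d((x+y)/2‖x), d((x+y)/2‖y)} ≤ d*(x,y) ≤ max{d((x+y)/2‖x), d((x+y)/2‖y)}`. -/
theorem stmt2 (x y : ℝ) (hx : 0 < x) (hxy : x < y) (hy : y < 1)
    (z : ℝ) (hz1 : x < z) (hz2 : z < y) (hz : klBer z x = klBer z y) :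
    min (klBer ((x + y) / 2) x) (klBer ((x + y) / 2) y) ≤ klBer z x ∧
      klBer z x ≤ max (klBer ((x + y) / 2) x) (klBer ((x + y) / 2) y) := by
  set m : ℝ := (x + y) / 2 with hm
  have hxm : x < m := by simp [hm]; linarith
  have hmy : m < y := by simp [hm]; linarith
  rcases le_total z m with h | h
  · constructor
    · have h1 : klBer m y ≤ klBer z y := klBer_anti hy (by linarith) h hmy.le
      calc min (klBer m x) (klBer m y) ≤ klBer m y := min_le_right _ _
        _ ≤ klBer z y := h1
        _ = klBer z x := hz.symm
    · have h1 : klBer z x ≤ klBer m x := klBer_mono hx hz1.le h (by linarith)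
      exact le_trans h1 (le_max_left _ _)
  · constructor
    · have h1 : klBer m x ≤ klBer z x := klBer_mono hx hxm.le h (by linarith)
      exact le_trans (min_le_left _ _) h1
    · have h1 : klBer z y ≤ klBer m y := klBer_anti hy (by linarith) h hz2.le
      calc klBer z x = klBer z y := hz
        _ ≤ klBer m y := h1
        _ ≤ max (klBer m x) (klBer m y) := le_max_right _ _
end

section
/- For all real numbers p and γ with 0 < p < 1, 0 < γ < 1, and p ≠ γ, we have d(p‖γ) ≤ (2/(γ·(1−γ)))·d*(p,γ). -/
private lemma klBer_le_chi2 (p γ : ℝ) (hp0 : 0 < p) (hp1 : p < 1) (hγ0 : 0 < γ) (hγ1 : γ < 1) :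
    klBer p γ ≤ (p - γ)^2 / (γ * (1 - γ)) := by
  have h1 : Real.log (p / γ) ≤ p / γ - 1 :=
    Real.log_le_sub_one_of_pos (by positivity)
  have h2 : Real.log ((1 - p) / (1 - γ)) ≤ (1 - p) / (1 - γ) - 1 :=
    Real.log_le_sub_one_of_pos (div_pos (by linarith) (by linarith))
  have key : p * (p / γ - 1) + (1 - p) * ((1 - p) / (1 - γ) - 1)
      = (p - γ)^2 / (γ * (1 - γ)) := by
    have e1 : γ ≠ 0 := hγ0.ne'
    have e2 : (1:ℝ) - γ ≠ 0 := by linarith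
    field_simp
    ring
  calc klBer p γ ≤ p * (p / γ - 1) + (1 - p) * ((1 - p) / (1 - γ) - 1) := by
        unfold klBer
        gcongr <;> linarith
    _ = (p - γ)^2 / (γ * (1 - γ)) := key

private lemma pinsker_ber (z q : ℝ) (hz0 : 0 < z) (hz1 : z < 1) (hq0 : 0 < q) (hq1 : q < 1) :
    2 * (z - q)^2 ≤ klBer z q := by
  set g : ℝ → ℝ := fun t => -z * Real.log t - (1 - z) * Real.log (1 - t) - 2 * (z - t)^2 with hg
  have hderiv : ∀ t ∈ Set.Ioo (0:ℝ) 1,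
      HasDerivAt g ((t - z) * (1 - 2*t)^2 / (t * (1 - t))) t := by
    intro t ht
    obtain ⟨ht0, ht1⟩ := ht
    have h1 : HasDerivAt (fun x : ℝ => Real.log x) t⁻¹ t := Real.hasDerivAt_log ht0.ne'
    have h2 : HasDerivAt (fun x : ℝ => (1:ℝ) - x) (-1) t := by
      simpa using (hasDerivAt_id t).const_sub 1
    have h2' : HasDerivAt (fun x : ℝ => Real.log (1 - x)) ((1 - t)⁻¹ * (-1)) t :=
      (Real.hasDerivAt_log (by intro h; linarith [sub_eq_zero.mp h])).comp t h2
    have h3 : HasDerivAt (fun x : ℝ => (z - x)^2) (2 * (z - t)^1 * (-1)) t := by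
      simpa using ((hasDerivAt_id t).const_sub z).fun_pow 2
    have H0 := ((h1.const_mul (-z)).sub (h2'.const_mul (1 - z))).sub (h3.const_mul 2)
    have hfun : g = fun x : ℝ =>
        -z * Real.log x - (1 - z) * Real.log (1 - x) - 2 * (z - x)^2 := rfl
    have hd : -z * t⁻¹ - (1 - z) * ((1 - t)⁻¹ * (-1)) - 2 * (2 * (z - t)^1 * (-1))
        = (t - z) * (1 - 2*t)^2 / (t * (1 - t)) := by
      have e1 : t ≠ 0 := ht0.ne'
      have e2 : (1:ℝ) - t ≠ 0 := by linarith
      field_simp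
      ring
    rw [hfun, ← hd]
    exact H0
  have hcont : ContinuousOn g (Set.Ioo 0 1) := fun t ht =>
    (hderiv t ht).continuousAt.continuousWithinAt
  have key : g z ≤ g q := by
    rcases le_or_gt z q with h | h
    · have hsub : Set.Icc z q ⊆ Set.Ioo (0:ℝ) 1 := fun t ht =>
        ⟨lt_of_lt_of_le hz0 ht.1, lt_of_le_of_lt ht.2 hq1⟩
      have hmono : MonotoneOn g (Set.Icc z q) := by
        apply monotoneOn_of_deriv_nonneg (convex_Icc z q) (hcont.mono hsub)
        · intro t ht
          rw [interior_Icc] at ht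
          exact (hderiv t (hsub ⟨ht.1.le, ht.2.le⟩)).differentiableAt.differentiableWithinAt
        · intro t ht
          rw [interior_Icc] at ht
          have hto : t ∈ Set.Ioo (0:ℝ) 1 := hsub ⟨ht.1.le, ht.2.le⟩
          rw [(hderiv t hto).deriv]
          have hpos : 0 < t * (1 - t) := mul_pos hto.1 (by linarith [hto.2])
          apply div_nonneg _ hpos.le
          exact mul_nonneg (by linarith [ht.1]) (sq_nonneg _)
      exact hmono (Set.left_mem_Icc.mpr h) (Set.right_mem_Icc.mpr h) h
    · have hsub : Set.Icc q z ⊆ Set.Ioo (0:ℝ) 1 := fun t ht =>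
        ⟨lt_of_lt_of_le hq0 ht.1, lt_of_le_of_lt ht.2 hz1⟩
      have hanti : AntitoneOn g (Set.Icc q z) := by
        apply antitoneOn_of_deriv_nonpos (convex_Icc q z) (hcont.mono hsub)
        · intro t ht
          rw [interior_Icc] at ht
          exact (hderiv t (hsub ⟨ht.1.le, ht.2.le⟩)).differentiableAt.differentiableWithinAt
        · intro t ht
          rw [interior_Icc] at ht
          have hto : t ∈ Set.Ioo (0:ℝ) 1 := hsub ⟨ht.1.le, ht.2.le⟩
          rw [(hderiv t hto).deriv]
          have hpos : 0 < t * (1 - t) := mul_pos hto.1 (by linarith [hto.2])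
          apply div_nonpos_of_nonpos_of_nonneg _ hpos.le
          exact mul_nonpos_of_nonpos_of_nonneg (by linarith [ht.2]) (sq_nonneg _)
      exact hanti (Set.left_mem_Icc.mpr h.le) (Set.right_mem_Icc.mpr h.le) h.le
  have hid : klBer z q - 2 * (z - q)^2 = g q - g z := by
    simp only [hg, klBer]
    rw [Real.log_div hz0.ne' hq0.ne',
      Real.log_div (by linarith : (1:ℝ) - z ≠ 0) (by linarith : (1:ℝ) - q ≠ 0)]
    ring
  linarith

/-- For `p ≠ γ` in `(0,1)`, `d(p‖γ) ≤ (2/(γ(1−γ))) d*(p,γ)`, where the Chernoff information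
`d*(p,γ)` equals `d(z‖p)` for the unique `z` strictly between `p` and `γ` satisfying
`d(z‖p) = d(z‖γ)`. -/
theorem stmt3 (p γ : ℝ) (hp0 : 0 < p) (hp1 : p < 1) (hγ0 : 0 < γ) (hγ1 : γ < 1)
    (hne : p ≠ γ)
    (z : ℝ) (hz1 : min p γ < z) (hz2 : z < max p γ) (hz : klBer z p = klBer z γ) :
    klBer p γ ≤ (2 / (γ * (1 - γ))) * klBer z p := by
  have hz0 : 0 < z := lt_of_le_of_lt (le_min hp0.le hγ0.le) hz1
  have hz1' : z < 1 := lt_of_lt_of_le hz2 (max_le hp1.le hγ1.le)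
  have hP1 : 2 * (z - p)^2 ≤ klBer z p := pinsker_ber z p hz0 hz1' hp0 hp1
  have hP2 : 2 * (z - γ)^2 ≤ klBer z γ := pinsker_ber z γ hz0 hz1' hγ0 hγ1
  have hP2' : 2 * (z - γ)^2 ≤ klBer z p := hz ▸ hP2
  have hsq : (p - γ)^2 ≤ 2 * klBer z p := by nlinarith [sq_nonneg ((z - p) - (z - γ))]
  have hden : 0 < γ * (1 - γ) := mul_pos hγ0 (by linarith)
  calc klBer p γ ≤ (p - γ)^2 / (γ * (1 - γ)) := klBer_le_chi2 p γ hp0 hp1 hγ0 hγ1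
    _ ≤ (2 * klBer z p) / (γ * (1 - γ)) := by gcongr
    _ = (2 / (γ * (1 - γ))) * klBer z p := by ring
end

section
/- Let a > 0 and b ∈ ℝ with b > log a. Then for every real number t ≥ e·(b − log a)/((e−1)·a), one has a·t ≥ b + log t. Consequently, every t > 0 satisfying a·t < b + log t must satisfy t < e·(b − log a)/((e−1)·a). -/
theorem stmt6 (a b : ℝ) (ha : 0 < a) (hb : Real.log a < b) :
    (∀ t : ℝ, Real.exp 1 * (b - Real.log a) / ((Real.exp 1 - 1) * a) ≤ t →
        b + Real.log t ≤ a * t) ∧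
    (∀ t : ℝ, 0 < t → a * t < b + Real.log t →
        t < Real.exp 1 * (b - Real.log a) / ((Real.exp 1 - 1) * a)) := by
  have he : (1:ℝ) < Real.exp 1 := by
    have := Real.exp_one_gt_d9; linarith
  set E := Real.exp 1 with hE
  have hE0 : (0:ℝ) < E := by linarith
  have hba : 0 < b - Real.log a := by linarith
  have hden : 0 < (E - 1) * a := by
    have : 0 < E - 1 := by linarith
    positivity
  have hT : 0 < E * (b - Real.log a) / ((E - 1) * a) := by positivity
  have main : ∀ t : ℝ, E * (b - Real.log a) / ((E - 1) * a) ≤ t → b + Real.log t ≤ a * t := by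
    intro t ht
    have ht0 : 0 < t := lt_of_lt_of_le hT ht
    have hlog : Real.log t ≤ a * t / E - Real.log a := by
      have h1 : Real.log (a * t / E) ≤ a * t / E - 1 :=
        Real.log_le_sub_one_of_pos (by positivity)
      have h2 : Real.log (a * t / E) = Real.log a + Real.log t - 1 := by
        rw [Real.log_div (by positivity) (by positivity),
          Real.log_mul (ne_of_gt ha) (ne_of_gt ht0), hE, Real.log_exp]
      linarith
    have key : E * (b - Real.log a) ≤ t * ((E - 1) * a) := (div_le_iff₀ hden).mp ht
    have h3 : b - Real.log a ≤ a * t - a * t / E := by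
      have h4 : a * t - a * t / E = a * t * (E - 1) / E := by
        field_simp
      rw [h4, le_div_iff₀ hE0]
      nlinarith [key]
    linarith
  refine ⟨main, ?_⟩
  intro t ht0 hlt
  by_contra h
  push_neg at h
  have := main t h
  linarith
end

section
/- Let 0 ≤ q < p < 1. Then the function s ↦ (1−p−s)·log((1−p−s)/(1−q−s)) is strictly increasing on the interval [0, 1−p). -/
theorem stmt11 (p q : ℝ) (hq : 0 ≤ q) (hqp : q < p) (hp : p < 1) :
    StrictMonoOn (fun s : ℝ => (1 - p - s) * Real.log ((1 - p - s) / (1 - q - s)))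
      (Set.Ico 0 (1 - p)) := by
  have key : ∀ x ∈ Set.Ico (0:ℝ) (1-p),
      HasDerivAt (fun s : ℝ => (1 - p - s) * Real.log ((1 - p - s) / (1 - q - s)))
        ((1-p-x)/(1-q-x) - 1 - Real.log ((1-p-x)/(1-q-x))) x := by
    intro x hx
    obtain ⟨hx0, hx1⟩ := hx
    have ha : 0 < 1 - p - x := by linarith
    have hb : 0 < 1 - q - x := by linarith
    have h1 : HasDerivAt (fun s : ℝ => 1 - p - s) (-1) x := by
      simpa using (hasDerivAt_id x).const_sub (1 - p)
    have h2 : HasDerivAt (fun s : ℝ => 1 - q - s) (-1) x := by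
      simpa using (hasDerivAt_id x).const_sub (1 - q)
    have hdiv := h1.div h2 hb.ne'
    have hlog := hdiv.log (div_pos ha hb).ne'
    have := h1.mul hlog
    refine HasDerivAt.congr_deriv this ?_
    simp only [Pi.div_apply]
    symm
    have hL : Real.log ((1-p-x)/(1-q-x)) = Real.log ((1-p-x)/(1-q-x)) := rfl
    field_simp
    ring
  apply strictMonoOn_of_deriv_pos (convex_Ico 0 (1-p))
  · intro x hx
    exact ((key x hx).continuousAt).continuousWithinAt
  · rw [interior_Ico]
    intro x hx
    have ha : 0 < 1 - p - x := by linarith [hx.2]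
    have hb : 0 < 1 - q - x := by linarith [hx.2, hqp]
    have hab : 1 - p - x < 1 - q - x := by linarith
    have ht0 : 0 < (1-p-x)/(1-q-x) := div_pos ha hb
    have ht1 : (1-p-x)/(1-q-x) < 1 := (div_lt_one hb).mpr hab
    have hlt := Real.log_lt_sub_one_of_pos ht0 (by linarith : (1-p-x)/(1-q-x) ≠ 1)
    rw [(key x ⟨hx.1.le, hx.2⟩).deriv]
    linarith
end

section
/- Let α be a nonzero real number. Then the function x ↦ x·log(x/(x−α)) is strictly decreasing on the interval (max(α,0), ∞). -/
theorem stmt12 (α : ℝ) (hα : α ≠ 0) :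
    StrictAntiOn (fun x : ℝ => x * Real.log (x / (x - α))) (Set.Ioi (max α 0)) := by
  have hsub : ∀ x ∈ Set.Ioi (max α 0), 0 < x ∧ 0 < x - α := by
    intro x hx
    exact ⟨lt_of_le_of_lt (le_max_right α 0) hx,
      sub_pos.2 (lt_of_le_of_lt (le_max_left α 0) hx)⟩
  have key : StrictAntiOn (fun x : ℝ => x * (Real.log x - Real.log (x - α)))
      (Set.Ioi (max α 0)) := by
    apply strictAntiOn_of_deriv_neg (convex_Ioi _)
    · intro x hx
      obtain ⟨h0, ha⟩ := hsub x hx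
      exact (continuousAt_id.mul ((Real.continuousAt_log h0.ne').sub
        ((continuousAt_id.sub continuousAt_const).log ha.ne'))).continuousWithinAt
    · intro x hx
      rw [interior_Ioi] at hx
      obtain ⟨hx0, hxa⟩ := hsub x hx
      have hd : HasDerivAt (fun x : ℝ => x * (Real.log x - Real.log (x - α)))
          (1 * (Real.log x - Real.log (x - α)) + x * (1/x - 1/(x - α))) x := by
        have h1 : HasDerivAt Real.log (1/x) x := by
          simpa [one_div] using Real.hasDerivAt_log hx0.ne'
        have h2 : HasDerivAt (fun x : ℝ => Real.log (x - α)) (1/(x - α)) x := by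
          have := ((hasDerivAt_id x).sub_const α).log hxa.ne'
          simpa [one_div] using this
        exact (hasDerivAt_id x).mul (h1.sub h2)
      rw [hd.deriv]
      have ht : (0:ℝ) < x / (x - α) := div_pos hx0 hxa
      have ht1 : x / (x - α) ≠ 1 := by
        intro h
        have := (div_eq_one_iff_eq hxa.ne').1 h
        exact hα (by linarith)
      have hlog : Real.log (x / (x - α)) < x / (x - α) - 1 :=
        Real.log_lt_sub_one_of_pos ht ht1
      rw [Real.log_div hx0.ne' hxa.ne'] at hlog
      have hx2 : x * (1/x - 1/(x - α)) = 1 - x / (x - α) := by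
        field_simp
      rw [hx2]
      linarith
  intro a ha b hb hab
  obtain ⟨ha0, haa⟩ := hsub a ha
  obtain ⟨hb0, hba⟩ := hsub b hb
  have := key ha hb hab
  simpa [Real.log_div ha0.ne' haa.ne', Real.log_div hb0.ne' hba.ne'] using this
end

section
/- Let p, γ ∈ (0,1) and let s ≥ 0 satisfy p + s + 2γ < 1. Then p·log(p/γ) + (1−p−s)·log((1−p−s)/(1−γ−s)) ≤ 2·d(p‖γ). -/
open Real Set

/-- Monotonicity of `t ↦ (a-t) * (log (a-t) - log (b-t))` on an interval where both stay
positive. -/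
lemma mono_aux (p γ : ℝ) (hγ0 : 0 < γ) (hpγ : 0 < p + γ) :
    MonotoneOn (fun t : ℝ => (1 - p - t) * (Real.log (1 - p - t) - Real.log (1 - γ - t)))
      (Set.Icc 0 (1 - p - 2 * γ)) := by
  have key : ∀ t ∈ Set.Icc (0:ℝ) (1 - p - 2 * γ),
      HasDerivAt (fun t : ℝ => (1 - p - t) * (Real.log (1 - p - t) - Real.log (1 - γ - t)))
        ((-1) * (Real.log (1 - p - t) - Real.log (1 - γ - t)) +
          (1 - p - t) * ((-1) / (1 - p - t) - (-1) / (1 - γ - t))) t := by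
    intro t ht
    obtain ⟨ht0, ht1⟩ := ht
    have hA : 0 < 1 - p - t := by linarith
    have hB : 0 < 1 - γ - t := by linarith
    have h1 : HasDerivAt (fun t : ℝ => 1 - p - t) (-1) t := by
      simpa using (hasDerivAt_id t).const_sub (1 - p)
    have h2 : HasDerivAt (fun t : ℝ => 1 - γ - t) (-1) t := by
      simpa using (hasDerivAt_id t).const_sub (1 - γ)
    exact h1.mul ((h1.log hA.ne').sub (h2.log hB.ne'))
  have hpos : ∀ t ∈ Set.Icc (0:ℝ) (1 - p - 2 * γ),
      0 ≤ (-1) * (Real.log (1 - p - t) - Real.log (1 - γ - t)) +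
          (1 - p - t) * ((-1) / (1 - p - t) - (-1) / (1 - γ - t)) := by
    intro t ht
    obtain ⟨ht0, ht1⟩ := ht
    have hA : 0 < 1 - p - t := by linarith
    have hB : 0 < 1 - γ - t := by linarith
    have hlog : Real.log ((1 - p - t) / (1 - γ - t)) ≤ (1 - p - t) / (1 - γ - t) - 1 :=
      Real.log_le_sub_one_of_pos (div_pos hA hB)
    rw [Real.log_div hA.ne' hB.ne'] at hlog
    have hexp : (1 - p - t) * ((-1) / (1 - p - t) - (-1) / (1 - γ - t))
        = (1 - p - t) / (1 - γ - t) - 1 := by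
      field_simp
      ring
    rw [hexp]
    linarith
  apply monotoneOn_of_deriv_nonneg (convex_Icc _ _)
  · exact fun t ht => (key t ht).continuousAt.continuousWithinAt
  · intro t ht
    rw [interior_Icc] at ht
    exact ((key t (Set.mem_Icc_of_Ioo ht)).differentiableAt).differentiableWithinAt
  · intro t ht
    rw [interior_Icc] at ht
    rw [(key t (Set.mem_Icc_of_Ioo ht)).deriv]
    exact hpos t (Set.mem_Icc_of_Ioo ht)


section
variable (γ : ℝ)

noncomputable def gFun (γ : ℝ) : ℝ → ℝ := fun x =>
  x * (Real.log x - Real.log γ) + 2 * (1 - x) * (Real.log (1 - x) - Real.log (1 - γ)) -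
    2 * γ * (Real.log (2 * γ) - Real.log (x + γ))

noncomputable def phiFun (γ : ℝ) : ℝ → ℝ := fun x =>
  Real.log x - Real.log γ - 1 - 2 * (Real.log (1 - x) - Real.log (1 - γ)) + 2 * γ / (x + γ)


/-- The derivative `φ` of `g` is monotone on intervals inside `(0,1)`. -/
lemma phi_mono (γ : ℝ) (hγ0 : 0 < γ) (u v : ℝ) (hu : 0 < u) (hv : v < 1) (huv : u ≤ v) :
    phiFun γ u ≤ phiFun γ v := by
  set φ := phiFun γ with hφ
  have hφdef : ∀ x, φ x = Real.log x - Real.log γ - 1 -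
      2 * (Real.log (1 - x) - Real.log (1 - γ)) + 2 * γ / (x + γ) := fun x => rfl
  have key : ∀ x ∈ Set.Icc u v, HasDerivAt φ
      (1 / x - 2 * ((-1) / (1 - x)) + (0 * (x + γ) - 2 * γ * 1) / (x + γ) ^ 2) x := by
    intro x hx
    have hx0 : 0 < x := lt_of_lt_of_le hu hx.1
    have hx1 : x < 1 := lt_of_le_of_lt hx.2 hv
    have hxγ : 0 < x + γ := by linarith
    have h1 : HasDerivAt (fun x : ℝ => 1 - x) (-1) x := by
      simpa using (hasDerivAt_id x).const_sub 1
    have hlg : HasDerivAt (fun x : ℝ => Real.log (1 - x)) ((-1) / (1 - x)) x :=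
      h1.log (by linarith)
    have hd : HasDerivAt (fun x : ℝ => 2 * γ / (x + γ))
        ((0 * (x + γ) - 2 * γ * 1) / (x + γ) ^ 2) x :=
      (hasDerivAt_const x (2 * γ)).div (by simpa using (hasDerivAt_id x).add_const γ) hxγ.ne'
    have := ((((Real.hasDerivAt_log hx0.ne').sub_const (Real.log γ)).sub_const 1).sub
        ((hlg.sub_const (Real.log (1 - γ))).const_mul 2)).add hd
    exact this.congr_deriv (by rw [one_div])
  have hpos : ∀ x ∈ Set.Icc u v,
      0 ≤ 1 / x - 2 * ((-1) / (1 - x)) + (0 * (x + γ) - 2 * γ * 1) / (x + γ) ^ 2 := by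
    intro x hx
    have hx0 : 0 < x := lt_of_lt_of_le hu hx.1
    have hx1 : x < 1 := lt_of_le_of_lt hx.2 hv
    have hxγ : 0 < x + γ := by linarith
    have h1 : 0 ≤ 1 / x - 2 * γ / (x + γ) ^ 2 := by
      rw [sub_nonneg, div_le_div_iff₀ (by positivity) hx0]
      nlinarith [sq_nonneg (x - γ)]
    have hx1' : (0:ℝ) < 1 - x := by linarith
    have h2 : 0 ≤ 2 * (1 / (1 - x)) := by positivity
    have e : 1 / x - 2 * ((-1) / (1 - x)) + (0 * (x + γ) - 2 * γ * 1) / (x + γ) ^ 2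
        = (1 / x - 2 * γ / (x + γ) ^ 2) + 2 * (1 / (1 - x)) := by ring
    rw [e]; linarith
  have := monotoneOn_of_deriv_nonneg (convex_Icc u v)
    (fun x hx => (key x hx).continuousAt.continuousWithinAt)
    (fun x hx => ((key x (by rw [interior_Icc] at hx; exact Set.mem_Icc_of_Ioo hx)).differentiableAt).differentiableWithinAt)
    (fun x hx => by
      rw [interior_Icc] at hx
      rw [(key x (Set.mem_Icc_of_Ioo hx)).deriv]
      exact hpos x (Set.mem_Icc_of_Ioo hx))
  exact this (Set.left_mem_Icc.2 huv) (Set.right_mem_Icc.2 huv) huv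

lemma g_hasDeriv (γ : ℝ) (hγ0 : 0 < γ) (x : ℝ) (hx0 : 0 < x) (hx1 : x < 1) :
    HasDerivAt (gFun γ) (phiFun γ x) x := by
  have hxγ : 0 < x + γ := by linarith
  have hx1' : (0:ℝ) < 1 - x := by linarith
  have P1 : HasDerivAt (fun x : ℝ => x * (Real.log x - Real.log γ))
      (1 * (Real.log x - Real.log γ) + x * x⁻¹) x :=
    (hasDerivAt_id x).mul ((Real.hasDerivAt_log hx0.ne').sub_const (Real.log γ))
  have h1 : HasDerivAt (fun x : ℝ => 1 - x) (-1) x := by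
    simpa using (hasDerivAt_id x).const_sub 1
  have hlg : HasDerivAt (fun x : ℝ => Real.log (1 - x)) ((-1) / (1 - x)) x :=
    h1.log hx1'.ne'
  have P2 : HasDerivAt (fun x : ℝ => 2 * (1 - x) * (Real.log (1 - x) - Real.log (1 - γ)))
      ((2 * (-1)) * (Real.log (1 - x) - Real.log (1 - γ)) +
        (2 * (1 - x)) * ((-1) / (1 - x))) x :=
    (h1.const_mul 2).mul (hlg.sub_const (Real.log (1 - γ)))
  have hlxγ : HasDerivAt (fun x : ℝ => Real.log (x + γ)) (1 / (x + γ)) x := by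
    simpa using ((hasDerivAt_id x).add_const γ).log hxγ.ne'
  have P3 : HasDerivAt (fun x : ℝ => 2 * γ * (Real.log (2 * γ) - Real.log (x + γ)))
      ((2 * γ) * (-(1 / (x + γ)))) x :=
    (hlxγ.const_sub (Real.log (2 * γ))).const_mul (2 * γ)
  have := (P1.add P2).sub P3
  refine this.congr_deriv ?_
  unfold phiFun
  field_simp
  ring

lemma phi_gamma (γ : ℝ) (hγ0 : 0 < γ) : phiFun γ γ = 0 := by
  unfold phiFun
  have h : γ + γ = 2 * γ := by ring
  rw [h]
  field_simp
  ring

lemma g_gamma (γ : ℝ) : gFun γ γ = 0 := by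
  unfold gFun
  have h : γ + γ = 2 * γ := by ring
  rw [h]
  ring

lemma g_nonneg (p γ : ℝ) (hp0 : 0 < p) (hp1 : p < 1) (hγ0 : 0 < γ) (hγ1 : γ < 1) :
    0 ≤ gFun γ p := by
  rcases le_total p γ with h | h
  · have hanti : AntitoneOn (gFun γ) (Set.Icc p γ) := by
      apply antitoneOn_of_deriv_nonpos (convex_Icc _ _)
      · intro x hx
        exact (g_hasDeriv γ hγ0 x (lt_of_lt_of_le hp0 hx.1)
          (lt_of_le_of_lt hx.2 hγ1)).continuousAt.continuousWithinAt
      · intro x hx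
        rw [interior_Icc] at hx
        exact (g_hasDeriv γ hγ0 x (lt_trans hp0 hx.1)
          (lt_trans hx.2 hγ1)).differentiableAt.differentiableWithinAt
      · intro x hx
        rw [interior_Icc] at hx
        have hx0 : 0 < x := lt_trans hp0 hx.1
        have hx1 : x < 1 := lt_trans hx.2 hγ1
        rw [(g_hasDeriv γ hγ0 x hx0 hx1).deriv]
        have := phi_mono γ hγ0 x γ hx0 hγ1 (le_of_lt hx.2)
        rw [phi_gamma γ hγ0] at this
        exact this
    have := hanti (Set.left_mem_Icc.2 h) (Set.right_mem_Icc.2 h) h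
    rw [g_gamma γ] at this
    exact this
  · have hmono : MonotoneOn (gFun γ) (Set.Icc γ p) := by
      apply monotoneOn_of_deriv_nonneg (convex_Icc _ _)
      · intro x hx
        exact (g_hasDeriv γ hγ0 x (lt_of_lt_of_le hγ0 hx.1)
          (lt_of_le_of_lt hx.2 hp1)).continuousAt.continuousWithinAt
      · intro x hx
        rw [interior_Icc] at hx
        exact (g_hasDeriv γ hγ0 x (lt_trans hγ0 hx.1)
          (lt_trans hx.2 hp1)).differentiableAt.differentiableWithinAt
      · intro x hx
        rw [interior_Icc] at hx
        have hx0 : 0 < x := lt_trans hγ0 hx.1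
        have hx1 : x < 1 := lt_trans hx.2 hp1
        rw [(g_hasDeriv γ hγ0 x hx0 hx1).deriv]
        have := phi_mono γ hγ0 γ x hγ0 hx1 (le_of_lt hx.1)
        rw [phi_gamma γ hγ0] at this
        exact this
    have := hmono (Set.left_mem_Icc.2 h) (Set.right_mem_Icc.2 h) h
    rw [g_gamma γ] at this
    exact this


theorem stmt13 (p γ s : ℝ) (hp : p ∈ Set.Ioo (0 : ℝ) 1) (hγ : γ ∈ Set.Ioo (0 : ℝ) 1)
    (hs : 0 ≤ s) (hlt : p + s + 2 * γ < 1) :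
    p * Real.log (p / γ) + (1 - p - s) * Real.log ((1 - p - s) / (1 - γ - s)) ≤
      2 * klBer p γ := by
  obtain ⟨hp0, hp1⟩ := hp
  obtain ⟨hγ0, hγ1⟩ := hγ
  have hpγ : 0 < p + γ := by linarith
  have hA : (0:ℝ) < 1 - p - s := by linarith
  have hB : (0:ℝ) < 1 - γ - s := by linarith
  have hm := mono_aux p γ hγ0 hpγ (Set.mem_Icc.2 ⟨hs, by linarith⟩)
    (Set.mem_Icc.2 ⟨by linarith, le_refl _⟩) (by linarith : s ≤ 1 - p - 2 * γ)
  simp only [] at hm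
  have e1 : 1 - p - (1 - p - 2 * γ) = 2 * γ := by ring
  have e2 : 1 - γ - (1 - p - 2 * γ) = p + γ := by ring
  rw [e1, e2] at hm
  have hg := g_nonneg p γ hp0 hp1 hγ0 hγ1
  unfold gFun at hg
  unfold klBer
  rw [Real.log_div hp0.ne' hγ0.ne', Real.log_div hA.ne' hB.ne',
    Real.log_div (by linarith : (1:ℝ) - p ≠ 0) (by linarith : (1:ℝ) - γ ≠ 0)]
  linarith

end
end

section
/- Let p_e ∈ (0,1/2), δ ∈ (0,1), and let k ≥ 1 be an integer. Let S₀ be a real number with S₀ ≥ 1 + 33·log(16k/δ)/(1−2p_e)². Let A and B be two disjoint finite sets of vertices (clusters), and let the edge weights between every pair of distinct vertices lying in the same cluster be independent random variables equal to +1 with probability 1−p_e and to −1 with probability p_e. For a subset S of vertices of a cluster define wt(S) = Σ_{i<j, i,j ∈ S} w_{ij}. If s ⊆ A is a fixed subset with |s| ≤ S₀ − 1 and |B| ≥ 2·S₀, then ℙ( wt(s) > wt(B) ) ≤ δ/(16k). -/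
open MeasureTheory ProbabilityTheory

lemma aux_pairs_card {V : Type*} [LinearOrder V] [DecidableEq V] (s : Finset V) :
    2 * ((s ×ˢ s).filter fun p => p.1 < p.2).card = s.card * s.card - s.card := by
  have hswap : ((s ×ˢ s).filter fun p => p.1 < p.2).card
      = ((s ×ˢ s).filter fun p => p.2 < p.1).card := by
    apply Finset.card_bij' (fun p _ => p.swap) (fun p _ => p.swap) <;>
      simp [Finset.mem_filter, Finset.mem_product, and_comm, and_assoc]
  have hunion : (s ×ˢ s).filter (fun p => p.1 < p.2) ∪ (s ×ˢ s).filter (fun p => p.2 < p.1)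
      = s.offDiag := by
    ext ⟨x, y⟩
    simp only [Finset.mem_union, Finset.mem_filter, Finset.mem_product, Finset.mem_offDiag]
    constructor
    · rintro (⟨⟨hx, hy⟩, h⟩ | ⟨⟨hx, hy⟩, h⟩)
      exacts [⟨hx, hy, h.ne⟩, ⟨hx, hy, h.ne'⟩]
    · rintro ⟨hx, hy, h⟩
      rcases Ne.lt_or_gt h with h | h
      exacts [Or.inl ⟨⟨hx, hy⟩, h⟩, Or.inr ⟨⟨hx, hy⟩, h⟩]
  have hdisj : Disjoint ((s ×ˢ s).filter (fun p => p.1 < p.2))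
      ((s ×ˢ s).filter (fun p => p.2 < p.1)) := by
    rw [Finset.disjoint_left]
    intro p hp hq
    simp only [Finset.mem_filter] at hp hq
    exact absurd hq.2 (lt_asymm hp.2)
  have := Finset.card_union_of_disjoint hdisj
  rw [hunion, Finset.offDiag_card] at this
  omega

lemma mgf_two_point {Ω : Type*} [MeasureSpace Ω] [IsProbabilityMeasure (ℙ : Measure Ω)]
    (X : Ω → ℝ) (hm : Measurable X) (hval : ∀ ω, X ω = 1 ∨ X ω = -1) (p : ℝ)
    (hp : ℙ {ω | X ω = 1} = ENNReal.ofReal (1 - p)) (hp2 : p ≤ 1) (r : ℝ) :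
    mgf X ℙ r = (1 - p) * Real.exp r + p * Real.exp (-r) := by
  have hS : MeasurableSet {ω | X ω = 1} := hm (measurableSet_singleton 1)
  have hfun : (fun ω => Real.exp (r * X ω))
      = fun ω => Real.exp (-r)
        + {ω | X ω = 1}.indicator (fun _ => Real.exp r - Real.exp (-r)) ω := by
    funext ω
    rcases hval ω with h | h
    · rw [Set.indicator_of_mem (by simpa [Set.mem_setOf_eq] using h), h]
      ring_nf
    · rw [Set.indicator_of_notMem (by simp only [Set.mem_setOf_eq, h]; norm_num), h]
      ring_nf
  rw [mgf, hfun, integral_add (integrable_const _)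
    ((integrable_const _).indicator hS), integral_const, integral_indicator_const _ hS,
    measureReal_def, measureReal_def, measure_univ, hp]
  have : (ENNReal.ofReal (1 - p)).toReal = 1 - p := ENNReal.toReal_ofReal (by linarith)
  rw [this]
  simp
  ring

lemma aux_exp_quad {r : ℝ} (hr : |r| ≤ 1) : Real.exp r ≤ 1 + r + r ^ 2 := by
  have h := Real.exp_bound hr (n := 2) (by norm_num)
  have h2 : |Real.exp r - (1 + r)| ≤ r ^ 2 * (3 / (2 * 2)) := by
    simpa [Finset.sum_range_succ, Nat.factorial] using h
  have h3 := (abs_sub_le_iff.mp h2).1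
  nlinarith [sq_nonneg r]

lemma aux_arith {q L S₀ a M : ℝ} (hq : 0 < q) (hq1 : q ≤ 1) (hL : 2 ≤ L)
    (hqS : 33 * L ≤ q ^ 2 * (S₀ - 1)) (ha0 : 0 ≤ a) (haU : 2 * a ≤ (S₀ - 1) ^ 2)
    (hM : 2 * S₀ ^ 2 - S₀ ≤ M) : 4 * L * (M + a) ≤ q ^ 2 * (M - a) ^ 2 := by
  have hq2 : q ^ 2 ≤ 1 := by nlinarith
  have hq2pos : 0 < q ^ 2 := by positivity
  have hS1 : 0 < S₀ - 1 := by by_contra h; push_neg at h; nlinarith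
  have hS67 : 67 ≤ S₀ := by nlinarith [mul_le_mul_of_nonneg_right hq2 hS1.le]
  have haS : a ≤ S₀ ^ 2 / 2 := by nlinarith
  have hM15 : 3 / 2 * S₀ ^ 2 ≤ M := by nlinarith
  have haM : 3 * a ≤ M := by nlinarith
  have hqM : 12 * L ≤ q ^ 2 * M := by
    nlinarith [mul_le_mul_of_nonneg_left hM15 hq2pos.le,
      mul_nonneg hq2pos.le (by nlinarith : (0:ℝ) ≤ S₀ ^ 2 - (S₀ - 1))]
  nlinarith [sq_nonneg (M - a), mul_le_mul_of_nonneg_left haM (sq_nonneg q),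
    mul_pos (mul_pos hq2pos (by nlinarith : (0:ℝ) < M)) (by nlinarith : (0:ℝ) < M)]

lemma aux_t_eq (q A₁ M₁ : ℝ) (hD : M₁ + A₁ ≠ 0) :
    q * (q * (M₁ - A₁) / (2 * (M₁ + A₁))) * (A₁ - M₁)
      + (q * (M₁ - A₁) / (2 * (M₁ + A₁))) ^ 2 * (A₁ + M₁)
      = -(q ^ 2 * (M₁ - A₁) ^ 2) / (4 * (M₁ + A₁)) := by
  field_simp
  ring

set_option maxHeartbeats 4000000 in
theorem stmt16 {Ω : Type*} [MeasureSpace Ω] [IsProbabilityMeasure (ℙ : Measure Ω)]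
    (p_e : ℝ) (hpe : p_e ∈ Set.Ioo (0 : ℝ) (1 / 2)) (δ : ℝ) (hδ : δ ∈ Set.Ioo (0 : ℝ) 1)
    (k : ℕ) (hk : 1 ≤ k)
    (S₀ : ℝ) (hS₀ : 1 + 33 * Real.log (16 * k / δ) / (1 - 2 * p_e) ^ 2 ≤ S₀)
    (V : Type*) [Fintype V] [LinearOrder V] [DecidableEq V]
    (A B : Finset V) (hAB : Disjoint A B)
    -- edge weights on pairs of distinct vertices lying in the same cluster
    (w : {e : V × V // e.1 < e.2 ∧ ((e.1 ∈ A ∧ e.2 ∈ A) ∨ (e.1 ∈ B ∧ e.2 ∈ B))} → Ω → ℝ)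
    (hmeas : ∀ e, Measurable (w e))
    (hindep : iIndepFun w)
    (hval : ∀ e ω, w e ω = 1 ∨ w e ω = -1)
    (hdist : ∀ e, ℙ {ω | w e ω = 1} = ENNReal.ofReal (1 - p_e))
    (wt : Finset V → Ω → ℝ)
    (hwt : ∀ S ω, wt S ω =
        ∑ e : {e : V × V // e.1 < e.2 ∧ ((e.1 ∈ A ∧ e.2 ∈ A) ∨ (e.1 ∈ B ∧ e.2 ∈ B))},
          if e.1.1 ∈ S ∧ e.1.2 ∈ S then w e ω else 0)
    (s : Finset V) (hsA : s ⊆ A) (hscard : (s.card : ℝ) ≤ S₀ - 1)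
    (hBcard : 2 * S₀ ≤ (B.card : ℝ)) :
    ℙ {ω | wt B ω < wt s ω} ≤ ENNReal.ofReal (δ / (16 * k)) := by
  classical
  obtain ⟨hpe0, hpe12⟩ := hpe
  obtain ⟨hδ0, hδ1⟩ := hδ
  set q : ℝ := 1 - 2 * p_e with hq_def
  set L : ℝ := Real.log (16 * k / δ) with hL_def
  have hq : 0 < q := by simp only [hq_def]; linarith
  have hq1 : q ≤ 1 := by simp only [hq_def]; linarith
  have hq2pos : 0 < q ^ 2 := by positivity
  have hk1 : (1 : ℝ) ≤ k := by exact_mod_cast hk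
  have hratio : (0 : ℝ) < 16 * k / δ := by positivity
  have h16 : (16 : ℝ) ≤ 16 * k / δ := by
    rw [le_div_iff₀ hδ0]; nlinarith
  have hL2 : 2 ≤ L := by
    rw [hL_def, Real.le_log_iff_exp_le hratio]
    refine le_trans ?_ h16
    have h1 := Real.exp_one_lt_d9
    have : Real.exp 2 = Real.exp 1 * Real.exp 1 := by
      rw [← Real.exp_add]; norm_num
    nlinarith [Real.exp_pos 1]
  have hqS : 33 * L ≤ q ^ 2 * (S₀ - 1) := by
    have h' : 33 * L / q ^ 2 ≤ S₀ - 1 := by linarith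
    rw [div_le_iff₀ hq2pos] at h'
    nlinarith [h']
  -- counting
  set a : ℕ := (Finset.univ.filter (fun e : {e : V × V // e.1 < e.2 ∧ ((e.1 ∈ A ∧ e.2 ∈ A) ∨ (e.1 ∈ B ∧ e.2 ∈ B))} => e.1.1 ∈ s ∧ e.1.2 ∈ s)).card with ha_def
  set M : ℕ := (Finset.univ.filter (fun e : {e : V × V // e.1 < e.2 ∧ ((e.1 ∈ A ∧ e.2 ∈ A) ∨ (e.1 ∈ B ∧ e.2 ∈ B))} => e.1.1 ∈ B ∧ e.1.2 ∈ B)).card with hM_def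
  have haU : 2 * (a : ℝ) ≤ (S₀ - 1) ^ 2 := by
    have h1 : a ≤ ((s ×ˢ s).filter fun p => p.1 < p.2).card := by
      apply Finset.card_le_card_of_injOn (fun e => e.1)
      · intro e he
        simp only [Finset.coe_filter, Set.mem_setOf_eq, Finset.mem_coe, Finset.mem_filter, Finset.mem_univ, true_and] at he
        simp only [Finset.coe_filter, Set.mem_setOf_eq, Finset.mem_coe, Finset.mem_filter, Finset.mem_product]
        exact ⟨⟨he.1, he.2⟩, e.2.1⟩
      · intro e1 _ e2 _ h
        exact Subtype.ext h
    have h2 := aux_pairs_card s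
    have h3 : 2 * a ≤ s.card * s.card - s.card := by rw [← h2]; omega
    have h4 : s.card ≤ s.card * s.card := by
      rcases Nat.eq_zero_or_pos s.card with h | h
      · simp [h]
      · exact Nat.le_mul_of_pos_left _ h
    have h5 : (2 * a : ℝ) ≤ (s.card : ℝ) * s.card - s.card := by
      have h6 := (Nat.cast_le (α := ℝ)).mpr h3
      rw [Nat.cast_sub h4] at h6
      push_cast at h6 ⊢
      linarith
    have hs0 : (0 : ℝ) ≤ (s.card : ℝ) := Nat.cast_nonneg _
    nlinarith [hscard]
  have hMlow : 2 * S₀ ^ 2 - S₀ ≤ (M : ℝ) := by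
    have h1 : ((B ×ˢ B).filter fun p => p.1 < p.2).card ≤ M := by
      apply Finset.card_le_card_of_surjOn (fun e : {e : V × V // e.1 < e.2 ∧ ((e.1 ∈ A ∧ e.2 ∈ A) ∨ (e.1 ∈ B ∧ e.2 ∈ B))} => e.1)
      intro p hp
      simp only [Finset.coe_filter, Finset.mem_product, Set.mem_setOf_eq,
        Finset.mem_filter] at hp
      refine ⟨⟨p, ⟨hp.2, Or.inr ⟨hp.1.1, hp.1.2⟩⟩⟩, ?_, rfl⟩
      simp only [Finset.coe_filter, Finset.mem_univ, Set.mem_setOf_eq, true_and]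
      exact ⟨hp.1.1, hp.1.2⟩
    have h2 := aux_pairs_card B
    have h3 : B.card * B.card - B.card ≤ 2 * M := by rw [← h2]; omega
    have hBB : B.card ≤ B.card * B.card := by
      rcases Nat.eq_zero_or_pos B.card with h | h
      · simp [h]
      · exact Nat.le_mul_of_pos_left _ h
    have h5 : (B.card : ℝ) * B.card - B.card ≤ 2 * M := by
      have h6 := (Nat.cast_le (α := ℝ)).mpr h3
      rw [Nat.cast_sub hBB] at h6
      push_cast at h6 ⊢
      linarith
    have hS2 : (2 : ℝ) ≤ 2 * S₀ := by nlinarith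
    have hprod : (0:ℝ) ≤ ((B.card:ℝ) - 2*S₀) * ((B.card:ℝ) + 2*S₀ - 1) :=
      mul_nonneg (by linarith) (by linarith)
    nlinarith [hprod]
  -- the coefficient function and the centered variables
  set c : {e : V × V // e.1 < e.2 ∧ ((e.1 ∈ A ∧ e.2 ∈ A) ∨ (e.1 ∈ B ∧ e.2 ∈ B))} → ℝ := fun e =>
    (if e.1.1 ∈ s ∧ e.1.2 ∈ s then (1:ℝ) else 0)
      - (if e.1.1 ∈ B ∧ e.1.2 ∈ B then (1:ℝ) else 0) with hc_def
  set Y : {e : V × V // e.1 < e.2 ∧ ((e.1 ∈ A ∧ e.2 ∈ A) ∨ (e.1 ∈ B ∧ e.2 ∈ B))} → Ω → ℝ := fun e ω => c e * w e ω with hY_def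
  have hnotboth : ∀ e : {e : V × V // e.1 < e.2 ∧ ((e.1 ∈ A ∧ e.2 ∈ A) ∨ (e.1 ∈ B ∧ e.2 ∈ B))}, ¬((e.1.1 ∈ s ∧ e.1.2 ∈ s) ∧ (e.1.1 ∈ B ∧ e.1.2 ∈ B)) := by
    rintro e ⟨⟨h1, -⟩, h3, -⟩
    exact Finset.disjoint_left.mp hAB (hsA h1) h3
  have hc_abs : ∀ e : {e : V × V // e.1 < e.2 ∧ ((e.1 ∈ A ∧ e.2 ∈ A) ∨ (e.1 ∈ B ∧ e.2 ∈ B))}, |c e| ≤ 1 := by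
    intro e
    simp only [hc_def]
    split_ifs <;> norm_num
  have hsum_c : ∑ e : {e : V × V // e.1 < e.2 ∧ ((e.1 ∈ A ∧ e.2 ∈ A) ∨ (e.1 ∈ B ∧ e.2 ∈ B))}, c e = (a : ℝ) - M := by
    simp only [hc_def]
    rw [Finset.sum_sub_distrib, Finset.sum_boole, Finset.sum_boole, ha_def, hM_def]
  have hsum_c2 : ∑ e : {e : V × V // e.1 < e.2 ∧ ((e.1 ∈ A ∧ e.2 ∈ A) ∨ (e.1 ∈ B ∧ e.2 ∈ B))}, (c e) ^ 2 = (a : ℝ) + M := by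
    have hpt : ∀ e : {e : V × V // e.1 < e.2 ∧ ((e.1 ∈ A ∧ e.2 ∈ A) ∨ (e.1 ∈ B ∧ e.2 ∈ B))}, (c e) ^ 2
        = (if e.1.1 ∈ s ∧ e.1.2 ∈ s then (1:ℝ) else 0)
          + (if e.1.1 ∈ B ∧ e.1.2 ∈ B then (1:ℝ) else 0) := by
      intro e
      have := hnotboth e
      simp only [hc_def]
      split_ifs with h1 h2 h2
      · exact absurd ⟨h1, h2⟩ this
      all_goals norm_num
    rw [Finset.sum_congr rfl fun e _ => hpt e, Finset.sum_add_distrib,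
      Finset.sum_boole, Finset.sum_boole, ha_def, hM_def]
  have hX : ∀ ω, wt s ω - wt B ω = (∑ e : {e : V × V // e.1 < e.2 ∧ ((e.1 ∈ A ∧ e.2 ∈ A) ∨ (e.1 ∈ B ∧ e.2 ∈ B))}, Y e) ω := by
    intro ω
    rw [hwt, hwt, ← Finset.sum_sub_distrib, Finset.sum_apply]
    refine Finset.sum_congr rfl fun e _ => ?_
    simp only [hY_def, hc_def]
    split_ifs <;> ring
  have hsubset : {ω | wt B ω < wt s ω} ⊆ {ω | (0:ℝ) ≤ (∑ e : {e : V × V // e.1 < e.2 ∧ ((e.1 ∈ A ∧ e.2 ∈ A) ∨ (e.1 ∈ B ∧ e.2 ∈ B))}, Y e) ω} := by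
    intro ω h
    simp only [Set.mem_setOf_eq] at h ⊢
    rw [← hX]
    linarith
  have hYmeas : ∀ e : {e : V × V // e.1 < e.2 ∧ ((e.1 ∈ A ∧ e.2 ∈ A) ∨ (e.1 ∈ B ∧ e.2 ∈ B))}, Measurable (Y e) := fun e => (hmeas e).const_mul (c e)
  have hindepY : iIndepFun Y ℙ := by
    have := hindep.comp (fun e x => c e * x) (fun e => measurable_id.const_mul (c e))
    exact this
    -- choice of the Chernoff parameter
  have ha0 : (0:ℝ) ≤ (a:ℝ) := Nat.cast_nonneg _
  have hq2le : q ^ 2 ≤ 1 := by nlinarith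
  have hS1 : (0:ℝ) < S₀ - 1 := by
    by_contra h
    push_neg at h
    nlinarith [hqS, hL2, hq2pos]
  have hS67 : (67:ℝ) ≤ S₀ := by
    nlinarith [mul_le_mul_of_nonneg_right hq2le hS1.le, hqS, hL2]
  have hMpos : (0:ℝ) < (M:ℝ) := by nlinarith [hMlow]
  have hMA : (0:ℝ) < (M:ℝ) + a := by linarith
  have hMa0 : (0:ℝ) ≤ (M:ℝ) - a := by nlinarith [hMlow, haU]
  set t : ℝ := q * ((M:ℝ) - a) / (2 * ((M:ℝ) + a)) with ht_def
  have ht0 : 0 ≤ t := by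
    apply div_nonneg (mul_nonneg hq.le hMa0) (by linarith)
  have ht1 : t ≤ 1 := by
    rw [ht_def, div_le_one (by linarith)]
    nlinarith
  -- integrability
  have hint : ∀ e : {e : V × V // e.1 < e.2 ∧ ((e.1 ∈ A ∧ e.2 ∈ A) ∨ (e.1 ∈ B ∧ e.2 ∈ B))}, Integrable (fun ω => Real.exp (t * Y e ω)) ℙ := by
    intro e
    refine (integrable_const (Real.exp 1)).mono'
      (((hYmeas e).const_mul t).exp.aestronglyMeasurable) (ae_of_all _ fun ω => ?_)
    rw [Real.norm_eq_abs, abs_of_pos (Real.exp_pos _), Real.exp_le_exp]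
    have hw1 : |w e ω| = 1 := by rcases hval e ω with h | h <;> simp [h]
    have : |t * Y e ω| ≤ 1 := by
      simp only [hY_def, abs_mul, hw1]
      calc |t| * (|c e| * 1) ≤ 1 * (1 * 1) := by
            apply mul_le_mul (by rwa [abs_of_nonneg ht0]) ?_ (by positivity) zero_le_one
            exact mul_le_mul_of_nonneg_right (hc_abs e) zero_le_one |>.trans (by norm_num)
        _ = 1 := by norm_num
    calc t * Y e ω ≤ |t * Y e ω| := le_abs_self _
      _ ≤ 1 := this
  have hXint : Integrable (fun ω => Real.exp (t * (∑ e : {e : V × V // e.1 < e.2 ∧ ((e.1 ∈ A ∧ e.2 ∈ A) ∨ (e.1 ∈ B ∧ e.2 ∈ B))}, Y e) ω)) ℙ :=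
    hindepY.integrable_exp_mul_sum hYmeas fun i _ => hint i
  -- Chernoff bound
  have hcher := measure_ge_le_exp_mul_mgf (μ := ℙ) (X := ∑ e : {e : V × V // e.1 < e.2 ∧ ((e.1 ∈ A ∧ e.2 ∈ A) ∨ (e.1 ∈ B ∧ e.2 ∈ B))}, Y e) 0 ht0 hXint
  rw [mul_zero, Real.exp_zero, one_mul] at hcher
  -- bound each mgf factor
  have hfac : ∀ e : {e : V × V // e.1 < e.2 ∧ ((e.1 ∈ A ∧ e.2 ∈ A) ∨ (e.1 ∈ B ∧ e.2 ∈ B))},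
      mgf (Y e) ℙ t ≤ Real.exp (q * (t * c e) + (t * c e) ^ 2) := by
    intro e
    have hmgfY : mgf (Y e) ℙ t = mgf (w e) ℙ (t * c e) := by
      simp only [mgf, hY_def]
      congr 1
      funext ω
      ring_nf
    have htp := mgf_two_point (w e) (hmeas e) (hval e) p_e (hdist e) (by linarith) (t * c e)
    have hr1 : |t * c e| ≤ 1 := by
      rw [abs_mul, abs_of_nonneg ht0]
      calc t * |c e| ≤ 1 * 1 := mul_le_mul ht1 (hc_abs e) (abs_nonneg _) zero_le_one
        _ = 1 := by norm_num
    have he1 : Real.exp (t * c e) ≤ 1 + t * c e + (t * c e) ^ 2 := aux_exp_quad hr1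
    have he2 : Real.exp (-(t * c e)) ≤ 1 - t * c e + (t * c e) ^ 2 := by
      have := aux_exp_quad (r := -(t * c e)) (by rwa [abs_neg])
      nlinarith [this]
    have hstep : (1 - p_e) * Real.exp (t * c e) + p_e * Real.exp (-(t * c e))
        ≤ 1 + (q * (t * c e) + (t * c e) ^ 2) := by
      have h1 : (1 - p_e) * Real.exp (t * c e) ≤ (1 - p_e) * (1 + t * c e + (t * c e) ^ 2) :=
        mul_le_mul_of_nonneg_left he1 (by linarith)
      have h2 : p_e * Real.exp (-(t * c e)) ≤ p_e * (1 - t * c e + (t * c e) ^ 2) :=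
        mul_le_mul_of_nonneg_left he2 hpe0.le
      simp only [hq_def]
      nlinarith [h1, h2]
    rw [hmgfY, htp]
    exact hstep.trans (by linarith [Real.add_one_le_exp (q * (t * c e) + (t * c e) ^ 2)])
  -- combine
  have hmgf_sum : mgf (∑ e : {e : V × V // e.1 < e.2 ∧ ((e.1 ∈ A ∧ e.2 ∈ A) ∨ (e.1 ∈ B ∧ e.2 ∈ B))}, Y e) ℙ t = ∏ e : {e : V × V // e.1 < e.2 ∧ ((e.1 ∈ A ∧ e.2 ∈ A) ∨ (e.1 ∈ B ∧ e.2 ∈ B))}, mgf (Y e) ℙ t :=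
    hindepY.mgf_sum hYmeas Finset.univ
  have hprod_le : ∏ e : {e : V × V // e.1 < e.2 ∧ ((e.1 ∈ A ∧ e.2 ∈ A) ∨ (e.1 ∈ B ∧ e.2 ∈ B))}, mgf (Y e) ℙ t
      ≤ Real.exp (q * t * ((a:ℝ) - M) + t ^ 2 * ((a:ℝ) + M)) := by
    calc ∏ e : {e : V × V // e.1 < e.2 ∧ ((e.1 ∈ A ∧ e.2 ∈ A) ∨ (e.1 ∈ B ∧ e.2 ∈ B))}, mgf (Y e) ℙ t
        ≤ ∏ e : {e : V × V // e.1 < e.2 ∧ ((e.1 ∈ A ∧ e.2 ∈ A) ∨ (e.1 ∈ B ∧ e.2 ∈ B))}, Real.exp (q * (t * c e) + (t * c e) ^ 2) :=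
          Finset.prod_le_prod (fun e _ => mgf_nonneg) (fun e _ => hfac e)
      _ = Real.exp (∑ e : {e : V × V // e.1 < e.2 ∧ ((e.1 ∈ A ∧ e.2 ∈ A) ∨ (e.1 ∈ B ∧ e.2 ∈ B))}, (q * (t * c e) + (t * c e) ^ 2)) := by
          rw [Real.exp_sum]
      _ = Real.exp (q * t * ((a:ℝ) - M) + t ^ 2 * ((a:ℝ) + M)) := by
          congr 1
          rw [Finset.sum_add_distrib]
          have e1 : ∑ e : {e : V × V // e.1 < e.2 ∧ ((e.1 ∈ A ∧ e.2 ∈ A) ∨ (e.1 ∈ B ∧ e.2 ∈ B))}, q * (t * c e) = q * t * ((a:ℝ) - M) := by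
            rw [← Finset.mul_sum]
            rw [← Finset.mul_sum, hsum_c]
            ring
          have e2 : ∑ e : {e : V × V // e.1 < e.2 ∧ ((e.1 ∈ A ∧ e.2 ∈ A) ∨ (e.1 ∈ B ∧ e.2 ∈ B))}, (t * c e) ^ 2 = t ^ 2 * ((a:ℝ) + M) := by
            have : ∀ e : {e : V × V // e.1 < e.2 ∧ ((e.1 ∈ A ∧ e.2 ∈ A) ∨ (e.1 ∈ B ∧ e.2 ∈ B))}, (t * c e) ^ 2 = t ^ 2 * (c e) ^ 2 := fun e => by ring
            rw [Finset.sum_congr rfl fun e _ => this e, ← Finset.mul_sum, hsum_c2]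
          rw [e1, e2]
  have hexp_le : q * t * ((a:ℝ) - M) + t ^ 2 * ((a:ℝ) + M) ≤ -L := by
    have hkey := aux_arith hq hq1 hL2 hqS ha0 haU hMlow
    have hEt : q * t * ((a:ℝ) - M) + t ^ 2 * ((a:ℝ) + M)
        = -(q ^ 2 * ((M:ℝ) - a) ^ 2) / (4 * ((M:ℝ) + a)) := by
      rw [ht_def]
      exact aux_t_eq q (a:ℝ) (M:ℝ) (ne_of_gt hMA)
    rw [hEt, neg_div, neg_le_neg_iff, le_div_iff₀ (by linarith : (0:ℝ) < 4 * ((M:ℝ) + a))]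
    linarith [hkey]
  have hfinal : (ℙ {ω | (0:ℝ) ≤ (∑ e : {e : V × V // e.1 < e.2 ∧ ((e.1 ∈ A ∧ e.2 ∈ A) ∨ (e.1 ∈ B ∧ e.2 ∈ B))}, Y e) ω}).toReal ≤ δ / (16 * k) := by
    have hexpL : Real.exp (-L) = δ / (16 * k) := by
      rw [Real.exp_neg, hL_def, Real.exp_log hratio]
      rw [inv_div]
    calc (ℙ {ω | (0:ℝ) ≤ (∑ e : {e : V × V // e.1 < e.2 ∧ ((e.1 ∈ A ∧ e.2 ∈ A) ∨ (e.1 ∈ B ∧ e.2 ∈ B))}, Y e) ω}).toReal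
        ≤ mgf (∑ e : {e : V × V // e.1 < e.2 ∧ ((e.1 ∈ A ∧ e.2 ∈ A) ∨ (e.1 ∈ B ∧ e.2 ∈ B))}, Y e) ℙ t := hcher
      _ = ∏ e : {e : V × V // e.1 < e.2 ∧ ((e.1 ∈ A ∧ e.2 ∈ A) ∨ (e.1 ∈ B ∧ e.2 ∈ B))}, mgf (Y e) ℙ t := hmgf_sum
      _ ≤ Real.exp (q * t * ((a:ℝ) - M) + t ^ 2 * ((a:ℝ) + M)) := hprod_le
      _ ≤ Real.exp (-L) := Real.exp_le_exp.mpr hexp_le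
      _ = δ / (16 * k) := hexpL
  rw [ENNReal.le_ofReal_iff_toReal_le (measure_ne_top _ _) (by positivity)]
  calc (ℙ {ω | wt B ω < wt s ω}).toReal
      ≤ (ℙ {ω | (0:ℝ) ≤ (∑ e : {e : V × V // e.1 < e.2 ∧ ((e.1 ∈ A ∧ e.2 ∈ A) ∨ (e.1 ∈ B ∧ e.2 ∈ B))}, Y e) ω}).toReal :=
        ENNReal.toReal_mono (measure_ne_top _ _) (measure_mono hsubset)
    _ ≤ δ / (16 * k) := hfinal
end

section
/- Let θ > 0 and let n ≥ 2 be an integer with exp(θ·n) ≥ n. Define f(a) = C(n, n−a)·exp(−θ·(2an − a² + a)) for integers a, where C(n, m) denotes the binomial coefficient. Then for every integer a with 1 ≤ a and 2a + 2 ≤ n, one has f(a) ≥ f(a+1); i.e., f is nonincreasing on this range. -/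
theorem stmt18 (θ : ℝ) (hθ : 0 < θ) (n : ℕ) (hn : 2 ≤ n)
    (hexp : (n : ℝ) ≤ Real.exp (θ * n))
    (f : ℕ → ℝ)
    (hf : ∀ a : ℕ, f a = (n.choose (n - a) : ℝ) *
        Real.exp (-θ * (2 * a * n - (a : ℝ) ^ 2 + a))) :
    ∀ a : ℕ, 1 ≤ a → 2 * a + 2 ≤ n → f (a + 1) ≤ f a := by
  intro a ha h2a
  have han : a + 1 ≤ n := by omega
  set c0 : ℝ := (n.choose (n - a) : ℝ) with hc0
  set c1 : ℝ := (n.choose (n - a - 1) : ℝ) with hc1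
  have hch : c0 * ((n : ℝ) - a) = c1 * ((a : ℝ) + 1) := by
    have h := Nat.choose_succ_right_eq n (n - a - 1)
    have h1 : n - a - 1 + 1 = n - a := by omega
    have h2 : n - (n - a - 1) = a + 1 := by omega
    rw [h1, h2] at h
    have := congrArg (fun k : ℕ => (k : ℝ)) h
    push_cast [Nat.cast_sub (by omega : a ≤ n)] at this
    linarith [this]
  have hc0pos : (0:ℝ) < c0 := by
    rw [hc0]
    exact_mod_cast Nat.choose_pos (by omega : n - a ≤ n)
  have hc1nonneg : (0:ℝ) ≤ c1 := by positivity
  -- c1 ≤ c0 * (n - a)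
  have hstep1 : c1 ≤ c0 * ((n:ℝ) - a) := by
    rw [hch]
    nlinarith [hc1nonneg, Nat.cast_nonneg (α := ℝ) a]
  -- n - a ≤ exp(θ*(2n-2a))
  have hstep2 : (n:ℝ) - a ≤ Real.exp (θ * (2 * n - 2 * a)) := by
    calc (n:ℝ) - a ≤ n := by have := Nat.cast_nonneg (α := ℝ) a; linarith
    _ ≤ Real.exp (θ * n) := hexp
    _ ≤ Real.exp (θ * (2 * n - 2 * a)) := by
        apply Real.exp_le_exp.mpr
        have h1 : (n:ℝ) ≤ 2 * n - 2 * a := by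
          have : (2 * a : ℝ) ≤ n := by exact_mod_cast (by omega : 2 * a ≤ n)
          linarith
        nlinarith
  have hkey : c1 * Real.exp (-θ * (2 * n - 2 * a)) ≤ c0 := by
    rw [neg_mul, Real.exp_neg, mul_inv_le_iff₀ (Real.exp_pos _)]
    calc c1 ≤ c0 * ((n:ℝ) - a) := hstep1
    _ ≤ c0 * Real.exp (θ * (2 * n - 2 * a)) :=
        mul_le_mul_of_nonneg_left hstep2 (le_of_lt hc0pos)
  rw [hf a, hf (a+1)]
  have hna : n - (a+1) = n - a - 1 := by omega
  rw [hna]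
  push_cast
  have hE : -θ * (2 * ((a:ℝ)+1) * n - ((a:ℝ)+1)^2 + ((a:ℝ)+1))
      = -θ * (2 * a * n - (a:ℝ)^2 + a) + -θ * (2 * n - 2 * a) := by ring
  rw [hE, Real.exp_add]
  calc c1 * (Real.exp (-θ * (2 * (a:ℝ) * n - (a:ℝ)^2 + a)) * Real.exp (-θ * (2 * n - 2 * a)))
      = (c1 * Real.exp (-θ * (2 * (n:ℝ) - 2 * a))) * Real.exp (-θ * (2 * (a:ℝ) * n - (a:ℝ)^2 + a)) := by ring
    _ ≤ c0 * Real.exp (-θ * (2 * (a:ℝ) * n - (a:ℝ)^2 + a)) :=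
        mul_le_mul_of_nonneg_right hkey (Real.exp_nonneg _)
end
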